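/- Let W be a vector space over ℂ and f : ℂ × ℂ → W any family (an element of W{x, log x}). Let T denote the operator x·d/dx, acting on families by (Tf)(n,m) = n·f(n,m) + (m+1)·f(n,m+1). Then for all K ∈ ℕ and N, M ∈ ℂ: (1/K!)·(T^K f)(N, M) = Σ_{j=0}^{K} (N^{K−j}/(K−j)!)·C(M+j, j)·f(N, M+j), with the convention 0^0 = 1. This is the assertion e^{y·x·d/dx} f = f(x·e^y): the left-hand side is the coefficient of y^K x^N (log x)^M in Σ_K (1/K!)(T^K f) y^K, and the right-hand side is the coefficient of y^K x^N (log x)^M in Σ_{n,m} f(n,m)·x^n·e^{ny}·(log x + y)^m, where (log x + y)^m is expanded in nonnegative integral powers of y. -/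

import Mathlib

/-- The operator `x·d/dx` acting on logarithmic formal series `W{x, log x}`,
represented as coefficient families `f : ℂ × ℂ → W`, where `f (n, m)` is the coefficient
of `x^n (log x)^m`. -/
noncomputable def Tlog {W : Type*} [AddCommGroup W] [Module ℂ W]
    (f : ℂ × ℂ → W) : ℂ × ℂ → W :=
  fun p => p.1 • f p + (p.2 + 1) • f (p.1, p.2 + 1)

/-- The generalized binomial coefficient `C(α, l) = α(α−1)⋯(α−l+1)/l!`. -/
noncomputable def cbinom (α : ℂ) (l : ℕ) : ℂ :=
  (∏ i ∈ Finset.range l, (α - (i : ℂ))) / (l.factorial : ℂ)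

lemma cbinom_zero (α : ℂ) : cbinom α 0 = 1 := by simp [cbinom]

lemma cbinom_succ (α : ℂ) (j : ℕ) :
    ((j : ℂ) + 1) * cbinom α (j + 1) = (α - j) * cbinom α j := by
  have h1 : ((j.factorial : ℂ)) ≠ 0 := Nat.cast_ne_zero.2 j.factorial_ne_zero
  have h2 : ((j : ℂ) + 1) ≠ 0 := Nat.cast_add_one_ne_zero j
  rw [cbinom, cbinom, Finset.prod_range_succ, Nat.factorial_succ]
  push_cast
  field_simp


lemma scalar_id (N M : ℂ) (k d : ℕ) (C0 C1 : ℂ)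
    (hC : ((k : ℂ) + 1) * C1 = (M + 1) * C0) :
    N * (((k + d + 1).factorial : ℂ) * N ^ d / (d.factorial : ℂ) * C1)
      + (M + 1) * (((k + d + 1).factorial : ℂ) * N ^ (d + 1) / ((d + 1).factorial : ℂ) * C0)
    = (((k + d + 1 + 1).factorial : ℂ)) * N ^ (d + 1) / ((d + 1).factorial : ℂ) * C1 := by
  have hd : ((d.factorial : ℂ)) ≠ 0 := Nat.cast_ne_zero.2 d.factorial_ne_zero
  have hd2 : ((d : ℂ) + 1) ≠ 0 := Nat.cast_add_one_ne_zero d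
  rw [show k + d + 1 + 1 = (k + d + 1) + 1 from rfl, Nat.factorial_succ (k + d + 1),
    Nat.factorial_succ d]
  push_cast
  field_simp
  linear_combination (-((k + d + 1).factorial : ℂ) * N ^ (d + 1)) * hC

lemma midkey {W : Type*} [AddCommGroup W] [Module ℂ W] (f : ℂ × ℂ → W)
    (N M : ℂ) (K : ℕ) : ∀ k ∈ Finset.range K,
    N • ((K.factorial : ℂ) * N ^ (K - (k + 1)) / ((K - (k + 1)).factorial : ℂ)
          * cbinom (M + ((k + 1 : ℕ) : ℂ)) (k + 1)) • f (N, M + ((k + 1 : ℕ) : ℂ))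
      + (M + 1) • ((K.factorial : ℂ) * N ^ (K - k) / ((K - k).factorial : ℂ)
          * cbinom (M + 1 + (k : ℂ)) k) • f (N, M + 1 + (k : ℂ))
    = (((K + 1).factorial : ℂ) * N ^ (K + 1 - (k + 1)) / ((K + 1 - (k + 1)).factorial : ℂ)
          * cbinom (M + ((k + 1 : ℕ) : ℂ)) (k + 1)) • f (N, M + ((k + 1 : ℕ) : ℂ)) := by
  intro k hk
  rw [Finset.mem_range] at hk
  obtain ⟨d, rfl⟩ : ∃ d, K = k + d + 1 := ⟨K - k - 1, by omega⟩
  have hc : M + 1 + (k : ℂ) = M + ((k + 1 : ℕ) : ℂ) := by push_cast; ring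
  rw [hc, smul_smul, smul_smul, ← add_smul]
  congr 1
  have e1 : k + d + 1 - (k + 1) = d := by omega
  have e2 : k + d + 1 - k = d + 1 := by omega
  have e3 : k + d + 1 + 1 - (k + 1) = d + 1 := by omega
  rw [e1, e2, e3]
  have hC : ((k : ℂ) + 1) * cbinom (M + ((k + 1 : ℕ) : ℂ)) (k + 1)
      = (M + 1) * cbinom (M + ((k + 1 : ℕ) : ℂ)) k := by
    rw [cbinom_succ]; push_cast; ring
  exact scalar_id N M k d _ _ hC

lemma topkey (M N : ℂ) (K : ℕ) (C0 C1 : ℂ) (hC : ((K : ℂ) + 1) * C1 = (M + 1) * C0) :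
    (M + 1) * ((K.factorial : ℂ) * N ^ (K - K) / ((K - K).factorial : ℂ) * C0)
    = (((K + 1).factorial : ℂ)) * N ^ (K + 1 - (K + 1)) / ((K + 1 - (K + 1)).factorial : ℂ) * C1 := by
  rw [Nat.sub_self, Nat.sub_self, Nat.factorial_succ]
  simp only [pow_zero, Nat.factorial_zero, Nat.cast_one, div_one, mul_one]
  push_cast
  linear_combination (-(K.factorial : ℂ)) * hC

lemma aux {W : Type*} [AddCommGroup W] [Module ℂ W] (f : ℂ × ℂ → W) (N : ℂ) :
    ∀ (K : ℕ) (M : ℂ), Tlog^[K] f (N, M)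
      = ∑ j ∈ Finset.range (K + 1),
          ((K.factorial : ℂ) * N ^ (K - j) / ((K - j).factorial : ℂ)
            * cbinom (M + (j : ℂ)) j) • f (N, M + (j : ℂ)) := by
  intro K
  induction K with
  | zero => intro M; simp [cbinom_zero]
  | succ K ih =>
    intro M
    rw [Function.iterate_succ_apply']
    show N • Tlog^[K] f (N, M) + (M + 1) • Tlog^[K] f (N, M + 1) = _
    rw [ih M, ih (M + 1), Finset.smul_sum, Finset.smul_sum]
    conv_rhs => rw [Finset.sum_range_succ']
    conv_rhs => rw [Finset.sum_range_succ]
    conv_lhs => rw [Finset.sum_range_succ']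
    conv_lhs => rw [Finset.sum_range_succ]
    rw [add_add_add_comm, ← Finset.sum_add_distrib,
      Finset.sum_congr rfl (midkey f N M K)]
    have h0 : N • ((K.factorial : ℂ) * N ^ (K - 0) / ((K - 0).factorial : ℂ)
          * cbinom (M + ((0 : ℕ) : ℂ)) 0) • f (N, M + ((0 : ℕ) : ℂ))
        = (((K + 1).factorial : ℂ) * N ^ (K + 1 - 0) / ((K + 1 - 0).factorial : ℂ)
          * cbinom (M + ((0 : ℕ) : ℂ)) 0) • f (N, M + ((0 : ℕ) : ℂ)) := by
      rw [smul_smul]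
      congr 1
      have h : ((K.factorial : ℂ)) ≠ 0 := Nat.cast_ne_zero.2 K.factorial_ne_zero
      have h1 : (((K + 1).factorial : ℂ)) ≠ 0 := Nat.cast_ne_zero.2 (K + 1).factorial_ne_zero
      simp only [Nat.sub_zero, cbinom_zero, mul_one]
      field_simp
      ring
    have htop : (M + 1) • ((K.factorial : ℂ) * N ^ (K - K) / ((K - K).factorial : ℂ)
          * cbinom (M + 1 + (K : ℂ)) K) • f (N, M + 1 + (K : ℂ))
        = (((K + 1).factorial : ℂ) * N ^ (K + 1 - (K + 1)) / ((K + 1 - (K + 1)).factorial : ℂ)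
          * cbinom (M + ((K + 1 : ℕ) : ℂ)) (K + 1)) • f (N, M + ((K + 1 : ℕ) : ℂ)) := by
      have hcK : M + 1 + (K : ℂ) = M + ((K + 1 : ℕ) : ℂ) := by push_cast; ring
      rw [hcK, smul_smul]
      congr 1
      have hC : ((K : ℂ) + 1) * cbinom (M + ((K + 1 : ℕ) : ℂ)) (K + 1)
          = (M + 1) * cbinom (M + ((K + 1 : ℕ) : ℂ)) K := by
        rw [cbinom_succ]; push_cast; ring
      exact topkey M N K _ _ hC
    rw [h0, htop]
    abel

/-- The identity `e^{y·x·d/dx} f = f(x e^y)` for logarithmic formal series, coefficientwise: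
the coefficient of `y^K x^N (log x)^M` on both sides agree. -/
theorem stmt4 {W : Type*} [AddCommGroup W] [Module ℂ W]
    (f : ℂ × ℂ → W) (K : ℕ) (N M : ℂ) :
    (K.factorial : ℂ)⁻¹ • Tlog^[K] f (N, M)
      = ∑ j ∈ Finset.range (K + 1),
          (N ^ (K - j) / ((K - j).factorial : ℂ) * cbinom (M + (j : ℂ)) j) •
            f (N, M + (j : ℂ)) := by
  rw [aux f N K M, Finset.smul_sum]
  refine Finset.sum_congr rfl fun j hj => ?_
  rw [smul_smul]
  congr 1
  have h : ((K.factorial : ℂ)) ≠ 0 := Nat.cast_ne_zero.2 K.factorial_ne_zero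
  rw [mul_div_assoc, mul_assoc, inv_mul_cancel_left₀ h]
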